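/- For every n ≥ 1, Emin(n) = (Γ(n/2)/Γ((n+1)/2)) · ∫₀^∞ (1 − (1/√π) ∫_{−y}^{y} e^{−x²} dx)ⁿ dy, where Emin(n) = (1/vol(S^{n-1})) ∫_{S^{n-1}} min_{1≤i≤n} |x_i| dσ. -/

import Mathlib

open MeasureTheory Real

/-- The mean over the unit sphere `S^{n-1} ⊂ ℝⁿ` of the smallest absolute value of a
coordinate, where the sphere carries its rotationally invariant surface measure. -/
noncomputable def Emin (n : ℕ) : ℝ :=
  (((volume : Measure (EuclideanSpace ℝ (Fin n))).toSphere Set.univ).toReal)⁻¹ *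
    ∫ y : Metric.sphere (0 : EuclideanSpace ℝ (Fin n)) 1,
      (⨅ i : Fin n, |(y : EuclideanSpace ℝ (Fin n)) i|)
      ∂(volume : Measure (EuclideanSpace ℝ (Fin n))).toSphere

section Aux

open Set Metric MeasureTheory.Measure

local notation "E" n => EuclideanSpace ℝ (Fin n)


theorem polar_eq (n : ℕ) (hn : 1 ≤ n) (f : (E n) → ℝ)
    (hf : ∀ (r : ℝ), 0 < r → ∀ y : sphere (0 : E n) 1, f (r • (y : E n)) = r * f (y : E n)) :
    ∫ x : E n, f x * Real.exp (-‖x‖ ^ 2) =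
      (∫ y : sphere (0 : E n) 1, f (y : E n) ∂(volume : Measure (E n)).toSphere) *
        ∫ r in Ioi (0 : ℝ), r ^ n * Real.exp (-r ^ 2) := by
  have hdim : Module.finrank ℝ (E n) = n := finrank_euclideanSpace_fin
  have : Nontrivial (EuclideanSpace ℝ (Fin n)) :=
    Module.nontrivial_of_finrank_pos (R := ℝ) (by rw [finrank_euclideanSpace_fin]; omega)
  set μ : Measure (E n) := volume with hμ
  have key := μ.measurePreserving_homeomorphUnitSphereProd
  set g : sphere (0 : E n) 1 × Ioi (0 : ℝ) → ℝ :=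
    fun p => f (p.1 : E n) * ((p.2 : ℝ) * Real.exp (-(p.2 : ℝ) ^ 2)) with hg
  calc
    ∫ x : E n, f x * Real.exp (-‖x‖ ^ 2) ∂μ
        = ∫ x : ({0}ᶜ : Set (E n)), f (x : E n) * Real.exp (-‖(x : E n)‖ ^ 2)
            ∂(μ.comap Subtype.val) := by
          rw [integral_subtype_comap (measurableSet_singleton 0).compl
              (fun x : E n => f x * Real.exp (-‖x‖ ^ 2)),
            MeasureTheory.restrict_compl_singleton]
    _ = ∫ p : sphere (0 : E n) 1 × Ioi (0 : ℝ), g p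
          ∂((μ.toSphere).prod (volumeIoiPow (Module.finrank ℝ (E n) - 1))) := by
          rw [← key.integral_comp (Homeomorph.measurableEmbedding _) g]
          refine integral_congr_ae (Filter.Eventually.of_forall fun x => ?_)
          have hx : (x : E n) ≠ 0 := x.2
          have hnorm : 0 < ‖(x : E n)‖ := norm_pos_iff.2 hx
          have h1 := hf ‖(x : E n)‖ hnorm ((homeomorphUnitSphereProd (E n)) x).1
          simp only [homeomorphUnitSphereProd_apply_fst_coe] at h1
          rw [smul_inv_smul₀ hnorm.ne'] at h1
          simp only [hg, homeomorphUnitSphereProd_apply_fst_coe,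
            homeomorphUnitSphereProd_apply_snd_coe]
          rw [h1]; ring
    _ = (∫ y : sphere (0 : E n) 1, f (y : E n) ∂μ.toSphere) *
          ∫ r : Ioi (0 : ℝ), (r : ℝ) * Real.exp (-(r : ℝ) ^ 2)
            ∂(volumeIoiPow (Module.finrank ℝ (E n) - 1)) :=
          integral_prod_mul (μ := μ.toSphere)
            (ν := volumeIoiPow (Module.finrank ℝ (E n) - 1))
            (fun y : sphere (0 : E n) 1 => f (y : E n))
            (fun r : Ioi (0 : ℝ) => (r : ℝ) * Real.exp (-(r : ℝ) ^ 2))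
    _ = _ := by
          congr 1
          simp only [Measure.volumeIoiPow, ENNReal.ofReal]
          rw [integral_withDensity_eq_integral_smul
            ((measurable_subtype_coe.pow_const _).real_toNNReal),
            integral_subtype_comap measurableSet_Ioi
              (fun a : ℝ => (a ^ (Module.finrank ℝ (E n) - 1)).toNNReal •
                (a * Real.exp (-a ^ 2)))]
          refine setIntegral_congr_fun measurableSet_Ioi fun x hx => ?_
          rw [NNReal.smul_def, Real.coe_toNNReal _ (pow_nonneg hx.out.le _), hdim, smul_eq_mul]
          rw [← mul_assoc, ← pow_succ, Nat.sub_add_cancel hn]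
theorem fubini_eq (n : ℕ) (hn : 1 ≤ n) :
    ∫ x : E n, (⨅ i, |x i|) * Real.exp (-‖x‖ ^ 2) =
      ∫ t in Ioi (0 : ℝ), (Real.sqrt π - ∫ u in (-t)..t, Real.exp (-u ^ 2)) ^ n := by
  haveI : Nonempty (Fin n) := ⟨⟨0, hn⟩⟩
  set i0 : Fin n := ⟨0, hn⟩ with hi0
  set m : (E n) → ℝ := fun x => ⨅ i, |x i| with hmdef
  have hm : Measurable m := Measurable.iInf fun i => ((measurable_pi_apply i).comp (MeasurableEquiv.toLp 2 (Fin n → ℝ)).symm.measurable).abs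
  have hm0 : ∀ x, 0 ≤ m x := fun x => Real.iInf_nonneg fun i => abs_nonneg _
  have hmle : ∀ (x : E n) (i : Fin n), m x ≤ |x i| := fun x i =>
    ciInf_le (Finite.bddBelow_range _) i
  have hnormsq : ∀ x : E n, Real.exp (-‖x‖ ^ 2) = ∏ i, Real.exp (-(x i) ^ 2) := by
    intro x
    have h1 : ‖x‖ ^ 2 = ∑ i, (x i) ^ 2 := by
      rw [EuclideanSpace.norm_eq, sq_sqrt (by positivity)]
      simp [sq_abs]
    have h2 : -‖x‖ ^ 2 = ∑ i, -(x i) ^ 2 := by rw [h1, ← Finset.sum_neg_distrib]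
    rw [h2, Real.exp_sum]
  have hg1 : Integrable (fun u : ℝ => Real.exp (-u ^ 2)) := by
    simpa using integrable_exp_neg_mul_sq (one_pos)
  have hh : Integrable (fun u : ℝ => (1 + |u|) * Real.exp (-u ^ 2)) := by
    have h2 : Integrable (fun u : ℝ => |u * Real.exp (-u ^ 2)|) := by
      simpa using (integrable_mul_exp_neg_mul_sq (one_pos)).abs
    refine (hg1.add h2).congr (Filter.Eventually.of_forall fun u => ?_)
    simp only [Pi.add_apply, abs_mul, abs_of_pos (Real.exp_pos _)]
    ring
  -- transfer of products
  have transfer : ∀ F : (Fin n → ℝ) → ℝ,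
      ∫ x : E n, F (fun i => x i) = ∫ x : Fin n → ℝ, F x := by
    intro F
    have e := EuclideanSpace.volume_preserving_symm_measurableEquiv_toLp (Fin n)
    rw [← e.integral_comp (MeasurableEquiv.toLp 2 (Fin n → ℝ)).symm.measurableEmbedding F]
    rfl
  have transferInt : ∀ h : ℝ → ℝ, Integrable h →
      Integrable (fun x : E n => ∏ i, h (x i)) := by
    intro h hh
    have hp : Integrable (fun x : Fin n → ℝ => ∏ i, h (x i)) :=
      Integrable.fintype_prod (fun _ => hh)
    have e := EuclideanSpace.volume_preserving_symm_measurableEquiv_toLp (Fin n)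
    have := (e.integrable_comp_emb
      (MeasurableEquiv.toLp 2 (Fin n → ℝ)).symm.measurableEmbedding).2 hp
    exact this
  have hdm : Measurable (fun x : E n => Real.exp (-‖x‖ ^ 2)) :=
    Real.measurable_exp.comp ((measurable_norm.pow_const 2).neg)
  have hExpE : Integrable (fun x : E n => Real.exp (-‖x‖ ^ 2)) :=
    (transferInt _ hg1).congr (Filter.Eventually.of_forall fun x => (hnormsq x).symm)
  have hInt : Integrable (fun x : E n => m x * Real.exp (-‖x‖ ^ 2)) := by
    refine (transferInt _ hh).mono' ((hm.mul hdm).aestronglyMeasurable)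
      (Filter.Eventually.of_forall fun x => ?_)
    rw [Real.norm_eq_abs, abs_of_nonneg (mul_nonneg (hm0 x) (Real.exp_nonneg _))]
    calc m x * Real.exp (-‖x‖ ^ 2)
        ≤ (∏ i, (1 + |x i|)) * Real.exp (-‖x‖ ^ 2) := by
          refine mul_le_mul_of_nonneg_right ?_ (Real.exp_nonneg _)
          refine le_trans (hmle x i0) ?_
          rw [← Finset.mul_prod_erase _ _ (Finset.mem_univ i0)]
          have h1 : (1 : ℝ) ≤ ∏ i ∈ Finset.univ.erase i0, (1 + |x i|) := by
            rw [← Finset.prod_const_one (s := Finset.univ.erase i0)]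
            exact Finset.prod_le_prod (fun i _ => zero_le_one)
              (fun i _ => by linarith [abs_nonneg (x i)])
          nlinarith [abs_nonneg (x i0)]
      _ = ∏ i, (1 + |x i|) * Real.exp (-(x i) ^ 2) := by
          rw [hnormsq x, ← Finset.prod_mul_distrib]
  set ν : Measure (E n) :=
    (volume : Measure (E n)).withDensity fun x => ENNReal.ofReal (Real.exp (-‖x‖ ^ 2)) with hν
  haveI : IsFiniteMeasure ν :=
    isFiniteMeasure_withDensity (ne_of_lt hExpE.lintegral_lt_top)
  have hι : ∫ x, m x ∂ν = ∫ x : E n, m x * Real.exp (-‖x‖ ^ 2) := by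
    rw [hν]
    simp only [ENNReal.ofReal]
    rw [integral_withDensity_eq_integral_smul hdm.real_toNNReal m]
    refine integral_congr_ae (Filter.Eventually.of_forall fun x => ?_)
    simp only [NNReal.smul_def, Real.coe_toNNReal _ (Real.exp_nonneg _), smul_eq_mul]
    ring
  have Im : Integrable m ν := by
    rw [hν]
    simp only [ENNReal.ofReal]
    rw [integrable_withDensity_iff_integrable_smul hdm.real_toNNReal]
    refine hInt.congr (Filter.Eventually.of_forall fun x => ?_)
    simp only [NNReal.smul_def, Real.coe_toNNReal _ (Real.exp_nonneg _), smul_eq_mul]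
    ring
  have layer : ∫ x, m x ∂ν = ∫ t in Ioi (0 : ℝ), (ν {x : E n | t < m x}).toReal :=
    Im.integral_eq_integral_meas_lt (Filter.Eventually.of_forall hm0)
  have measNu : ∀ t : ℝ, 0 ≤ t → (ν {x : E n | t < m x}).toReal
      = (Real.sqrt π - ∫ u in (-t)..t, Real.exp (-u ^ 2)) ^ n := by
    intro t ht
    have hAm : MeasurableSet {x : E n | t < m x} := measurableSet_lt measurable_const hm
    classical
    set gt : ℝ → ℝ := fun u => if t < |u| then Real.exp (-u ^ 2) else 0 with hgt
    have hptwise : ∀ x : E n,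
        Set.indicator {x : E n | t < m x} (fun x => Real.exp (-‖x‖ ^ 2)) x
          = ∏ i, gt (x i) := by
      intro x
      by_cases hx : x ∈ {x : E n | t < m x}
      · rw [Set.indicator_of_mem hx, hnormsq x]
        refine Finset.prod_congr rfl fun i _ => ?_
        exact (if_pos (lt_of_lt_of_le hx (hmle x i))).symm
      · rw [Set.indicator_of_notMem hx]
        have hex : ∃ i, ¬ t < |x i| := by
          by_contra hcon
          push_neg at hcon
          obtain ⟨i0, hmin⟩ := Finite.exists_min (fun j => |x j|)
          have hmx : m x = |x i0| :=
            le_antisymm (ciInf_le (Finite.bddBelow_range _) i0) (le_ciInf hmin)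
          exact hx (show t < m x by rw [hmx]; exact hcon i0)
        obtain ⟨i, hi⟩ := hex
        refine (Finset.prod_eq_zero (Finset.mem_univ i) ?_).symm
        exact if_neg hi
    have hgt_int : ∫ u : ℝ, gt u = Real.sqrt π - ∫ u in (-t)..t, Real.exp (-u ^ 2) := by
      have hsplit : ∀ u : ℝ, gt u = Real.exp (-u ^ 2)
          - Set.indicator (Icc (-t) t) (fun u => Real.exp (-u ^ 2)) u := by
        intro u
        show (if t < |u| then Real.exp (-u ^ 2) else 0) = _
        by_cases hu : t < |u|
        · rw [if_pos hu, Set.indicator_of_notMem, sub_zero]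
          intro hmem
          exact absurd (abs_le.2 ⟨hmem.1, hmem.2⟩) (not_le.2 hu)
        · rw [if_neg hu, Set.indicator_of_mem, _root_.sub_self]
          have := abs_le.1 (not_lt.1 hu)
          exact ⟨this.1, this.2⟩
      calc ∫ u : ℝ, gt u
          = ∫ u : ℝ, (Real.exp (-u ^ 2)
              - Set.indicator (Icc (-t) t) (fun u => Real.exp (-u ^ 2)) u) :=
            integral_congr_ae (Filter.Eventually.of_forall hsplit)
        _ = (∫ u : ℝ, Real.exp (-u ^ 2))
              - ∫ u : ℝ, Set.indicator (Icc (-t) t) (fun u => Real.exp (-u ^ 2)) u :=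
            integral_sub hg1 (hg1.indicator measurableSet_Icc)
        _ = Real.sqrt π - ∫ u in (-t)..t, Real.exp (-u ^ 2) := by
            rw [integral_indicator measurableSet_Icc, integral_Icc_eq_integral_Ioc,
              ← intervalIntegral.integral_of_le (by linarith : -t ≤ t)]
            congr 1
            simpa using integral_gaussian 1
    have h1 : ν {x : E n | t < m x}
        = ENNReal.ofReal (∫ x in {x : E n | t < m x}, Real.exp (-‖x‖ ^ 2)) := by
      rw [hν, withDensity_apply _ hAm,
        ← ofReal_integral_eq_lintegral_ofReal hExpE.integrableOn
          (Filter.Eventually.of_forall fun x => Real.exp_nonneg _)]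
    rw [h1, ENNReal.toReal_ofReal (setIntegral_nonneg hAm fun x _ => Real.exp_nonneg _),
      ← integral_indicator hAm]
    calc ∫ x : E n, Set.indicator {x : E n | t < m x} (fun x => Real.exp (-‖x‖ ^ 2)) x
        = ∫ x : E n, ∏ i, gt (x i) :=
          integral_congr_ae (Filter.Eventually.of_forall hptwise)
      _ = ∫ x : Fin n → ℝ, ∏ i, gt (x i) := transfer (fun x => ∏ i, gt (x i))
      _ = (∫ u : ℝ, gt u) ^ n := by
          rw [volume_pi, integral_fintype_prod_eq_pow (ι := Fin n) gt, Fintype.card_fin]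
      _ = (Real.sqrt π - ∫ u in (-t)..t, Real.exp (-u ^ 2)) ^ n := by rw [hgt_int]
  rw [← hι, layer]
  exact setIntegral_congr_fun measurableSet_Ioi fun t ht => measNu t (le_of_lt ht)
-- moment integral
theorem moment_int (n : ℕ) : ∫ r in Ioi (0 : ℝ), r ^ n * Real.exp (-r ^ 2)
    = Real.Gamma ((n + 1) / 2) / 2 := by
  have h := integral_rpow_mul_exp_neg_rpow (p := 2) (q := n) two_pos
    (by linarith [Nat.cast_nonneg (α := ℝ) n] : (-1 : ℝ) < n)
  calc ∫ r in Ioi (0 : ℝ), r ^ n * Real.exp (-r ^ 2)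
      = ∫ r in Ioi (0 : ℝ), r ^ (n : ℝ) * Real.exp (-r ^ (2 : ℝ)) := by
        refine setIntegral_congr_fun measurableSet_Ioi fun x hx => ?_
        rw [← Real.rpow_natCast x n, ← Real.rpow_natCast x 2]
        norm_num
    _ = Real.Gamma ((n + 1) / 2) / 2 := by rw [h]; ring
-- sphere measure
theorem sphere_meas (n : ℕ) (hn : 1 ≤ n) :
    (((volume : Measure (EuclideanSpace ℝ (Fin n))).toSphere Set.univ)).toReal
      = 2 * Real.sqrt π ^ n / Real.Gamma (n / 2) := by
  haveI : Nonempty (Fin n) := ⟨⟨0, hn⟩⟩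
  have hdim : Module.finrank ℝ (EuclideanSpace ℝ (Fin n)) = n := finrank_euclideanSpace_fin
  have hn' : (0 : ℝ) < n := by exact_mod_cast hn
  rw [Measure.toSphere_apply_univ, EuclideanSpace.volume_ball, hdim]
  have hG : Real.Gamma ((Fintype.card (Fin n) : ℝ) / 2 + 1)
      = ((n : ℝ) / 2) * Real.Gamma ((n : ℝ) / 2) := by
    rw [Fintype.card_fin]
    exact Real.Gamma_add_one (by positivity)
  rw [hG, Fintype.card_fin]
  have hGpos : 0 < Real.Gamma ((n : ℝ) / 2) := Real.Gamma_pos_of_pos (by positivity)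
  rw [ENNReal.ofReal_one, one_pow, one_mul, ENNReal.toReal_mul, ENNReal.toReal_natCast,
    ENNReal.toReal_ofReal (by positivity)]
  field_simp

end Aux

/-- **Integral formula for `Emin`:**
`Emin n = (Γ(n/2)/Γ((n+1)/2)) · ∫₀^∞ (1 - (1/√π) ∫_{-y}^{y} e^{-x²} dx)ⁿ dy`. -/
theorem Emin_eq_integral_formula (n : ℕ) (hn : 1 ≤ n) :
    Emin n = (Real.Gamma (n / 2) / Real.Gamma ((n + 1) / 2)) *
      ∫ y in Set.Ioi (0 : ℝ),
        (1 - (Real.sqrt Real.pi)⁻¹ * ∫ x in (-y)..y, Real.exp (-x ^ 2)) ^ n := by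
  haveI : Nonempty (Fin n) := ⟨⟨0, hn⟩⟩
  have hsqpos : 0 < Real.sqrt π := Real.sqrt_pos.2 Real.pi_pos
  have hG0 : 0 < Real.Gamma ((n : ℝ) / 2) :=
    Real.Gamma_pos_of_pos (by positivity)
  have hG1 : 0 < Real.Gamma (((n : ℝ) + 1) / 2) :=
    Real.Gamma_pos_of_pos (by positivity)
  have hhom : ∀ (r : ℝ), 0 < r → ∀ y : Metric.sphere (0 : EuclideanSpace ℝ (Fin n)) 1,
      (fun x : EuclideanSpace ℝ (Fin n) => ⨅ i, |x i|) (r • (y : EuclideanSpace ℝ (Fin n)))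
        = r * (fun x : EuclideanSpace ℝ (Fin n) => ⨅ i, |x i|) (y : EuclideanSpace ℝ (Fin n)) := by
    intro r hr y
    simp only
    rw [Real.mul_iInf_of_nonneg hr.le]
    congr 1; funext i
    simp [abs_mul, abs_of_nonneg hr.le]
  have hpolar := polar_eq n hn (fun x => ⨅ i, |x i|) hhom
  simp only at hpolar
  have hfub := fubini_eq n hn
  have hmom := moment_int n
  have hsph := sphere_meas n hn
  set S : ℝ := ∫ y : Metric.sphere (0 : EuclideanSpace ℝ (Fin n)) 1,
      (⨅ i : Fin n, |(y : EuclideanSpace ℝ (Fin n)) i|)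
      ∂(volume : Measure (EuclideanSpace ℝ (Fin n))).toSphere with hS
  set J : ℝ := ∫ y in Set.Ioi (0 : ℝ),
      (1 - (Real.sqrt Real.pi)⁻¹ * ∫ x in (-y)..y, Real.exp (-x ^ 2)) ^ n with hJ
  have hRHS : (∫ t in Set.Ioi (0 : ℝ),
      (Real.sqrt π - ∫ u in (-t)..t, Real.exp (-u ^ 2)) ^ n) = Real.sqrt π ^ n * J := by
    rw [hJ, ← integral_const_mul]
    refine setIntegral_congr_fun measurableSet_Ioi fun t ht => ?_
    rw [← mul_pow]
    congr 1
    field_simp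
  have hkey : S * (Real.Gamma (((n : ℝ) + 1) / 2) / 2) = Real.sqrt π ^ n * J := by
    rw [← hmom, ← hpolar, hfub, hRHS]
  rw [Emin, ← hS, hsph]
  have hspn : (0 : ℝ) < Real.sqrt π ^ n := by positivity
  field_simp at hkey ⊢
  nlinarith [hkey]
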